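/- Let X be a separable Banach space and Y a Banach space such that the closed dual unit ball (B_{Y*}, w*) has countable tightness for convex sets in the sense that (B_{Y*}, w*)^ℕ has convex countable tightness. Then the map ξ : (B_{(X ⊗̂_π Y)*}, w*) → (B_{Y*}, w*)^ℕ, ξ(S) := (S_X(xₙ))ₙ where (xₙ) is a fixed dense sequence in B_X, is an affine homeomorphic embedding. -/

import Mathlib

set_option maxHeartbeats 1000000
set_option synthInstance.maxHeartbeats 400000


open TensorProduct NormedSpace

section Defs

variable (X Y : Type*) [NormedAddCommGroup X] [NormedSpace ℝ X]
  [NormedAddCommGroup Y] [NormedSpace ℝ Y]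

/-- A continuous bilinear form, viewed as a plain bilinear map. -/
noncomputable def bilinL :
    (X →L[ℝ] Y →L[ℝ] ℝ) →ₗ[ℝ] (X →ₗ[ℝ] Y →ₗ[ℝ] ℝ) :=
  (LinearMap.llcomp ℝ X (Y →L[ℝ] ℝ) (Y →ₗ[ℝ] ℝ) (ContinuousLinearMap.coeLM ℝ)) ∘ₗ
    ContinuousLinearMap.coeLM ℝ

/-- The linear functional on `X ⊗ Y` induced by a continuous bilinear form. -/
noncomputable def tensorEval :
    (X →L[ℝ] Y →L[ℝ] ℝ) →ₗ[ℝ] (X ⊗[ℝ] Y →ₗ[ℝ] ℝ) :=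
  (TensorProduct.lift.equiv (RingHom.id ℝ) X Y ℝ).toLinearMap ∘ₗ bilinL X Y

/-- The weak* topology on the space of continuous bilinear forms on `X × Y`
(identified with the dual of `X ⊗̂_π Y`): the topology of pointwise convergence on
(the dense subspace) `X ⊗ Y`; on bounded sets, such as the dual unit ball below,
it agrees with the weak* topology of `(X ⊗̂_π Y)*`. -/
noncomputable def weakStarTopologyBilin :
    TopologicalSpace (X →L[ℝ] Y →L[ℝ] ℝ) :=
  TopologicalSpace.induced
    (fun S => (fun u : X ⊗[ℝ] Y => tensorEval X Y S u)) inferInstance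

/-- The unit ball of `(X ⊗̂_π Y)*`, i.e. of the continuous bilinear forms on `X × Y`,
endowed (below) with the weak* topology. -/
def dualBallBilin : Type _ := {S : X →L[ℝ] Y →L[ℝ] ℝ // ‖S‖ ≤ 1}

noncomputable instance : TopologicalSpace (dualBallBilin X Y) :=
  TopologicalSpace.induced Subtype.val (weakStarTopologyBilin X Y)

variable {X Y}

/-- The map `ξ : B_{(X ⊗̂_π Y)*} → (B_{Y*}, w*)^ℕ`, `ξ(S) = (S_X(xₙ))ₙ`. -/
noncomputable def xiMap (x : ℕ → X) (S : dualBallBilin X Y) : ℕ → WeakDual ℝ Y :=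
  fun n => StrongDual.toWeakDual (S.1 (x n))

end Defs

section Aux

open Filter Topology

variable {X Y : Type*} [NormedAddCommGroup X] [NormedSpace ℝ X]
  [NormedAddCommGroup Y] [NormedSpace ℝ Y]

lemma tensorEval_tmul (S : X →L[ℝ] Y →L[ℝ] ℝ) (a : X) (b : Y) :
    tensorEval X Y S (a ⊗ₜ b) = S a b := by
  simp [tensorEval, bilinL, TensorProduct.lift.equiv]

/-- The topology induced on the dual ball by `ξ`. -/
noncomputable def tInd (x : ℕ → X) : TopologicalSpace (dualBallBilin X Y) :=
  TopologicalSpace.induced (xiMap (X := X) (Y := Y) x) inferInstance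

/-- Evaluation at `(x n, y)` is continuous in the topology induced by `xiMap`. -/
lemma keyA (x : ℕ → X) (n : ℕ) (y : Y) :
    @Continuous _ _ (tInd (Y := Y) x) inferInstance
      (fun S : dualBallBilin X Y => S.1 (x n) y) := by
  letI : TopologicalSpace (dualBallBilin X Y) := tInd (Y := Y) x
  have h1 : @Continuous _ _ (tInd (Y := Y) x) inferInstance (xiMap (X := X) (Y := Y) x) :=
    continuous_induced_dom
  exact (WeakDual.eval_continuous y).comp ((continuous_apply n).comp h1)

/-- Evaluation at any `(x', y)` is continuous in the topology induced by `xiMap`,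
by uniform approximation on the dual ball. -/
lemma keyB (x : ℕ → X)
    (hdense : closure (Set.range x) = Metric.closedBall (0 : X) 1)
    (x' : X) (y : Y) :
    @Continuous _ _ (tInd (Y := Y) x) inferInstance
      (fun S : dualBallBilin X Y => S.1 x' y) := by
  letI tι : TopologicalSpace (dualBallBilin X Y) := tInd (Y := Y) x
  by_cases hx0 : x' = 0
  · simp only [hx0, map_zero, ContinuousLinearMap.zero_apply]
    exact continuous_const
  have hxn : ‖x'‖ ≠ 0 := norm_ne_zero_iff.mpr hx0
  have hu : ‖x'‖⁻¹ • x' ∈ closure (Set.range x) := by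
    rw [hdense, Metric.mem_closedBall, dist_zero_right, norm_smul, norm_inv, norm_norm,
      inv_mul_cancel₀ hxn]
  obtain ⟨g, hg, hgu⟩ := mem_closure_iff_seq_limit.mp hu
  choose m hm using hg
  have hF : ∀ k, @Continuous _ _ tι inferInstance
      (fun S : dualBallBilin X Y => ‖x'‖ * S.1 (g k) y) := by
    intro k
    have h := keyA (Y := Y) x (m k) y
    rw [hm k] at h
    exact continuous_const.mul h
  have hz : Tendsto (fun k => ‖x'‖ • g k) atTop (𝓝 x') := by
    have h := hgu.const_smul (‖x'‖ : ℝ)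
    simpa [smul_smul, mul_inv_cancel₀ hxn] using h
  have hb : Tendsto (fun k => ‖‖x'‖ • g k - x'‖ * ‖y‖) atTop (𝓝 0) := by
    have h0 : Tendsto (fun k => ‖‖x'‖ • g k - x'‖) atTop (𝓝 0) :=
      tendsto_iff_norm_sub_tendsto_zero.mp hz
    simpa using h0.mul_const ‖y‖
  have hTU : TendstoUniformly (fun k (S : dualBallBilin X Y) => ‖x'‖ * S.1 (g k) y)
      (fun S => S.1 x' y) atTop := by
    rw [Metric.tendstoUniformly_iff]
    intro ε hε
    filter_upwards [hb.eventually (gt_mem_nhds hε)] with k hk S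
    refine lt_of_le_of_lt ?_ hk
    have heq : S.1 x' y - ‖x'‖ * S.1 (g k) y = -(S.1 (‖x'‖ • g k - x') y) := by
      simp [map_sub]
    rw [Real.dist_eq, heq, abs_neg, ← Real.norm_eq_abs]
    calc ‖S.1 (‖x'‖ • g k - x') y‖ ≤ ‖S.1‖ * ‖‖x'‖ • g k - x'‖ * ‖y‖ :=
          S.1.le_opNorm₂ _ _
      _ ≤ 1 * ‖‖x'‖ • g k - x'‖ * ‖y‖ := by gcongr; exact S.2
      _ = ‖‖x'‖ • g k - x'‖ * ‖y‖ := by ring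
  exact hTU.continuous (Filter.Eventually.of_forall hF).frequently

end Aux

open Topology in
/-- Let `X` be a separable Banach space with a dense sequence
`(xₙ) ⊆ B_X` and `Y` a Banach space. The map
`ξ : (B_{(X ⊗̂_π Y)*}, w*) → (B_{Y*}, w*)^ℕ`, `ξ(S) := (S_X(xₙ))ₙ`, is an affine
homeomorphic embedding (each value `S_X(xₙ)` has norm at most `1`, so `ξ` takes values
in `(B_{Y*})^ℕ`). -/
theorem xiMap_affine_embedding
    {X Y : Type*} [NormedAddCommGroup X] [NormedSpace ℝ X] [CompleteSpace X]
    [NormedAddCommGroup Y] [NormedSpace ℝ Y] [CompleteSpace Y]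
    (x : ℕ → X) (hx : ∀ n, x n ∈ Metric.closedBall (0 : X) 1)
    (hdense : closure (Set.range x) = Metric.closedBall (0 : X) 1) :
    (∀ (S : dualBallBilin X Y) (n : ℕ), ‖S.1 (x n)‖ ≤ 1) ∧
    (∀ (S S' W : dualBallBilin X Y) (t : ℝ), 0 ≤ t → t ≤ 1 →
      W.1 = t • S.1 + (1 - t) • S'.1 →
      xiMap x W = fun n => t • xiMap x S n + (1 - t) • xiMap x S' n) ∧
    Topology.IsEmbedding (xiMap (X := X) (Y := Y) x) := by
  have hnorm1 : ∀ n, ‖x n‖ ≤ 1 := fun n => by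
    simpa [Metric.mem_closedBall, dist_zero_right] using hx n
  refine ⟨?_, ?_, ?_⟩
  · intro S n
    calc ‖S.1 (x n)‖ ≤ ‖S.1‖ * ‖x n‖ := S.1.le_opNorm _
      _ ≤ 1 * 1 := mul_le_mul S.2 (hnorm1 n) (norm_nonneg _) zero_le_one
      _ = 1 := one_mul 1
  · intro S S' W t _ _ hW
    funext n
    simp [xiMap, hW]
  · -- injectivity
    have hinj : Function.Injective (xiMap (X := X) (Y := Y) x) := by
      intro S S' h
      have hval : ∀ (n : ℕ) (y : Y), S.1 (x n) y = S'.1 (x n) y := by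
        intro n y
        have h1 := congrArg (fun φ => φ y) (congrFun h n)
        simpa [xiMap] using h1
      have hz : ∀ z ∈ Metric.closedBall (0 : X) 1, (S.1 - S'.1) z = 0 := by
        rw [← hdense]
        have heq : Set.EqOn (fun z => (S.1 - S'.1) z) (fun _ => 0) (Set.range x) := by
          rintro _ ⟨n, rfl⟩
          ext y
          simpa [sub_eq_zero] using hval n y
        exact fun z hzz => (heq.closure (S.1 - S'.1).continuous continuous_const) hzz
      have hD : ∀ x', S.1 x' = S'.1 x' := by
        intro x'
        by_cases h0 : x' = 0
        · simp [h0]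
        have hxn : ‖x'‖ ≠ 0 := norm_ne_zero_iff.mpr h0
        have hmem : ‖x'‖⁻¹ • x' ∈ Metric.closedBall (0 : X) 1 := by
          rw [Metric.mem_closedBall, dist_zero_right, norm_smul, norm_inv, norm_norm,
            inv_mul_cancel₀ hxn]
        have h1 := hz _ hmem
        have h2 : (S.1 - S'.1) x' = 0 := by
          have h3 := congrArg (fun w => (‖x'‖ : ℝ) • w) h1
          simpa [map_smul, smul_smul, mul_inv_cancel₀ hxn] using h3
        have h4 : S.1 x' - S'.1 x' = 0 := by simpa using h2
        exact sub_eq_zero.mp h4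
      exact Subtype.ext (ContinuousLinearMap.ext hD)
    -- the instance topology as an induced topology on the tensor-evaluation map
    have hinst : (inferInstance : TopologicalSpace (dualBallBilin X Y)) =
        TopologicalSpace.induced
          (fun S : dualBallBilin X Y => fun u : X ⊗[ℝ] Y => tensorEval X Y S.1 u)
          inferInstance := by
      show TopologicalSpace.induced Subtype.val (weakStarTopologyBilin X Y) = _
      rw [weakStarTopologyBilin, induced_compose]
      rfl
    have hle1 : (inferInstance : TopologicalSpace (dualBallBilin X Y)) ≤
        tInd (Y := Y) x := by
      refine continuous_iff_le_induced.mp ?_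
      refine continuous_pi fun n => ?_
      refine WeakDual.continuous_of_continuous_eval fun y => ?_
      letI : TopologicalSpace (X →L[ℝ] Y →L[ℝ] ℝ) := weakStarTopologyBilin X Y
      have h1 : Continuous (Subtype.val : dualBallBilin X Y → (X →L[ℝ] Y →L[ℝ] ℝ)) :=
        continuous_induced_dom
      have h2 : @Continuous _ _ (weakStarTopologyBilin X Y) inferInstance
          (fun S : (X →L[ℝ] Y →L[ℝ] ℝ) => fun u : X ⊗[ℝ] Y => tensorEval X Y S u) :=
        continuous_induced_dom
      have h3 := ((continuous_apply (x n ⊗ₜ[ℝ] y)).comp h2).comp h1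
      have h4 : (fun S : dualBallBilin X Y => tensorEval X Y S.1 (x n ⊗ₜ[ℝ] y))
          = fun S : dualBallBilin X Y => S.1 (x n) y := by
        funext S; exact tensorEval_tmul S.1 (x n) y
      have h5 : Continuous fun S : dualBallBilin X Y => S.1 (x n) y := by
        rw [← h4]; exact h3
      exact h5
    have hcont2 : Continuous[tInd (Y := Y) x, inferInstance]
        (fun S : dualBallBilin X Y => fun u : X ⊗[ℝ] Y => tensorEval X Y S.1 u) := by
      letI tι : TopologicalSpace (dualBallBilin X Y) := tInd (Y := Y) x
      refine continuous_pi fun u => ?_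
      induction u using TensorProduct.induction_on with
      | zero => simpa using (continuous_const : Continuous fun _ : dualBallBilin X Y => (0 : ℝ))
      | tmul a b =>
          have h := keyB x hdense a b
          have h4 : (fun S : dualBallBilin X Y => tensorEval X Y S.1 (a ⊗ₜ[ℝ] b))
              = fun S : dualBallBilin X Y => S.1 a b := by
            funext S; exact tensorEval_tmul S.1 a b
          rw [h4]
          exact h
      | add u v hu hv =>
          have h4 : (fun S : dualBallBilin X Y => tensorEval X Y S.1 (u + v))
              = fun S : dualBallBilin X Y =>
                  tensorEval X Y S.1 u + tensorEval X Y S.1 v := by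
            funext S; exact map_add _ u v
          rw [h4]
          exact hu.add hv
    have hle2 : tInd (Y := Y) x ≤
        (inferInstance : TopologicalSpace (dualBallBilin X Y)) := by
      rw [hinst]
      exact continuous_iff_le_induced.mp hcont2
    exact ⟨⟨le_antisymm hle1 hle2⟩, hinj⟩
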